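/- The function g : (0,1] → ℝ defined by g(t) = (1/2)·log₂( 4 t^t / (t+1)^{t+1} ) is strictly decreasing on (0,1]. -/

import Mathlib

lemma aux_strictAntiOn :
    StrictAntiOn (fun t : ℝ => t * Real.log t - (t + 1) * Real.log (t + 1))
      (Set.Ioc 0 1) := by
  apply strictAntiOn_of_deriv_neg (convex_Ioc 0 1)
  · apply ContinuousOn.sub
    · exact continuousOn_id.mul (Real.continuousOn_log.mono (by
        intro x hx; simp; exact ne_of_gt hx.1))
    · apply ContinuousOn.mul (by fun_prop)
      apply Real.continuousOn_log.comp (by fun_prop)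
      intro x hx
      simp only [Set.mem_Ioc] at hx
      simp only [Set.mem_compl_iff, Set.mem_singleton_iff]
      linarith [hx.1]
  · intro x hx
    rw [interior_Ioc] at hx
    have h1 : HasDerivAt (fun t : ℝ => t * Real.log t) (Real.log x + 1) x :=
      Real.hasDerivAt_mul_log (ne_of_gt hx.1)
    have h2 : HasDerivAt (fun t : ℝ => (t + 1) * Real.log (t + 1))
        (Real.log (x + 1) + 1) x := by
      have := (Real.hasDerivAt_mul_log (by linarith [hx.1] : x + 1 ≠ 0)).comp x
        ((hasDerivAt_id x).add_const 1)
      rw [mul_one] at this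
      exact this
    have h := (h1.sub h2).deriv
    rw [show deriv (fun t : ℝ => t * Real.log t - (t + 1) * Real.log (t + 1)) x = _ from h]
    have : Real.log x < Real.log (x + 1) := Real.log_lt_log hx.1 (by linarith)
    linarith

theorem strictAntiOn_linEntropy_aux :
    StrictAntiOn
      (fun t : ℝ => (1 / 2) * Real.logb 2 (4 * t ^ t / (t + 1) ^ (t + 1)))
      (Set.Ioc 0 1) := by
  have key : ∀ t ∈ Set.Ioc (0:ℝ) 1,
      (1 / 2) * Real.logb 2 (4 * t ^ t / (t + 1) ^ (t + 1)) =
        (1 / (2 * Real.log 2)) *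
          (Real.log 4 + (t * Real.log t - (t + 1) * Real.log (t + 1))) := by
    intro t ht
    have ht0 : 0 < t := ht.1
    have ht1 : 0 < t + 1 := by linarith
    have hpow : (0:ℝ) < t ^ t := Real.rpow_pos_of_pos ht0 t
    have hpow1 : (0:ℝ) < (t + 1) ^ (t + 1) := Real.rpow_pos_of_pos ht1 (t + 1)
    rw [Real.logb, Real.log_div (by positivity) (ne_of_gt hpow1),
      Real.log_mul (by norm_num) (ne_of_gt hpow),
      Real.log_rpow ht0, Real.log_rpow ht1]
    field_simp
    ring
  intro x hx y hy hxy
  dsimp only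
  rw [key x hx, key y hy]
  have hlog2 : (0:ℝ) < Real.log 2 := Real.log_pos (by norm_num)
  have hf := aux_strictAntiOn hx hy hxy
  have hc : (0:ℝ) < 1 / (2 * Real.log 2) := by positivity
  dsimp only at hf
  nlinarith [mul_lt_mul_of_pos_left hf hc]
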